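/- Let G be a minimal non-sum-perfect graph with α(G) = ω(G) = 3. Then no vertex of G lies in every triangle of G, and G contains no two vertex-disjoint triangles. -/
import Mathlib


open SimpleGraph Finset

/-- The clique number of a finite graph: the largest `n` such that `G` has an `n`-clique. -/
noncomputable def omegaNum {V : Type*} [Fintype V] (G : SimpleGraph V) : ℕ :=
  sSup {n | ∃ s : Finset V, G.IsNClique n s}

/-- The stability (independence) number: the clique number of the complement. -/
noncomputable def alphaNum {V : Type*} [Fintype V] (G : SimpleGraph V) : ℕ :=
  omegaNum Gᶜ

/-- A graph is sum-perfect if every induced subgraph `H` satisfies `α(H) + ω(H) ≥ |V(H)|`. -/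
def SumPerfect {V : Type*} [Fintype V] (G : SimpleGraph V) : Prop :=
  ∀ s : Finset V, s.card ≤ alphaNum (G.induce (s : Set V)) + omegaNum (G.induce (s : Set V))

/-- `G` is minimally non-sum-perfect: not sum-perfect, but every proper induced subgraph is. -/
def MinimalNonSumPerfect {V : Type*} [Fintype V] (G : SimpleGraph V) : Prop :=
  ¬ SumPerfect G ∧ ∀ s : Finset V, s ≠ Finset.univ → SumPerfect (G.induce (s : Set V))

/-- `G` is threshold: there is an ordering of all vertices in which every vertex is adjacent
to all of the earlier vertices or to none of them. -/
def IsThreshold {V : Type*} [Fintype V] (G : SimpleGraph V) : Prop :=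
  ∃ L : List V, L.Nodup ∧ (∀ v : V, v ∈ L) ∧
    ∀ (i j k : ℕ) (hi : i < L.length) (hj : j < L.length) (hk : k < L.length),
      j < i → k < i →
        (G.Adj (L.get ⟨i, hi⟩) (L.get ⟨j, hj⟩) ↔ G.Adj (L.get ⟨i, hi⟩) (L.get ⟨k, hk⟩))

lemma clique_map' {α β : Type*} (f : α ↪ β) {H : SimpleGraph α} {G' : SimpleGraph β}
    (hf : ∀ a b, H.Adj a b → G'.Adj (f a) (f b)) {n : ℕ} {t : Finset α}
    (h : H.IsNClique n t) : G'.IsNClique n (t.map f) := by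
  constructor
  · intro x hx y hy hxy
    simp only [Finset.coe_map, Set.mem_image, Finset.mem_coe] at hx hy
    obtain ⟨a, ha, rfl⟩ := hx; obtain ⟨b, hb, rfl⟩ := hy
    exact hf a b (h.1 ha hb (fun e => hxy (by rw [e])))
  · simp [h.2]

lemma omega_bdd {V : Type*} [Fintype V] (G : SimpleGraph V) :
    BddAbove {n | ∃ s : Finset V, G.IsNClique n s} := by
  refine ⟨Fintype.card V, ?_⟩
  rintro n ⟨s, hs⟩
  rw [← hs.2, ← Finset.card_univ]
  exact Finset.card_le_card (Finset.subset_univ s)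

lemma le_omega {V : Type*} [Fintype V] {G : SimpleGraph V} {n : ℕ} {s : Finset V}
    (h : G.IsNClique n s) : n ≤ omegaNum G :=
  le_csSup (omega_bdd G) ⟨s, h⟩

lemma exists_clique_omega {V : Type*} [Fintype V] (G : SimpleGraph V) :
    ∃ s : Finset V, G.IsNClique (omegaNum G) s :=
  Nat.sSup_mem ⟨0, by exact ⟨∅, by simp⟩⟩ (omega_bdd G)

lemma omega_le_of_map {α β : Type*} [Fintype α] [Fintype β] (f : α ↪ β)
    {H : SimpleGraph α} {G' : SimpleGraph β}
    (hf : ∀ a b, H.Adj a b → G'.Adj (f a) (f b)) : omegaNum H ≤ omegaNum G' := by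
  apply csSup_le ⟨0, by exact ⟨∅, by simp⟩⟩
  rintro n ⟨t, ht⟩
  exact le_omega (clique_map' f hf ht)

lemma alpha_le_of_map {α β : Type*} [Fintype α] [Fintype β] (f : α ↪ β)
    {H : SimpleGraph α} {G' : SimpleGraph β}
    (hf : ∀ a b, Hᶜ.Adj a b → G'ᶜ.Adj (f a) (f b)) : alphaNum H ≤ alphaNum G' :=
  omega_le_of_map f hf

lemma omega_induce_le {V : Type*} [Fintype V] (G : SimpleGraph V) (s : Set V) [Fintype s] :
    omegaNum (G.induce s) ≤ omegaNum G :=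
  omega_le_of_map (Function.Embedding.subtype _) (fun _ _ hab => hab)

lemma alpha_induce_le {V : Type*} [Fintype V] (G : SimpleGraph V) (s : Set V) [Fintype s] :
    alphaNum (G.induce s) ≤ alphaNum G := by
  apply omega_le_of_map (Function.Embedding.subtype _)
  intro a b hab
  exact ⟨fun e => hab.1 (Subtype.val_injective e), hab.2⟩

def univEmb {V : Type*} [Fintype V] : V ↪ ↥((↑(Finset.univ : Finset V) : Set V)) where
  toFun v := ⟨v, Finset.mem_univ v⟩
  inj' a b h := congrArg Subtype.val h

lemma omega_le_induce_univ {V : Type*} [Fintype V] (G : SimpleGraph V) :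
    omegaNum G ≤ omegaNum (G.induce (↑(Finset.univ : Finset V) : Set V)) :=
  omega_le_of_map univEmb (fun _ _ hab => hab)

lemma alpha_le_induce_univ {V : Type*} [Fintype V] (G : SimpleGraph V) :
    alphaNum G ≤ alphaNum (G.induce (↑(Finset.univ : Finset V) : Set V)) :=
  alpha_le_of_map univEmb
    (fun _ _ hab => ⟨fun e => hab.1 (congrArg Subtype.val e), hab.2⟩)

lemma key {V : Type*} [Fintype V] (G : SimpleGraph V) (s : Finset V)
    (h : SumPerfect (G.induce (↑s : Set V))) :
    s.card ≤ alphaNum (G.induce (↑s : Set V)) + omegaNum (G.induce (↑s : Set V)) := by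
  classical
  have h1 := h Finset.univ
  have e : (Finset.univ : Finset ↥(↑s : Set V)).card = s.card := by
    rw [Finset.card_univ]
    exact Fintype.card_coe s
  rw [e] at h1
  refine h1.trans (Nat.add_le_add ?_ ?_)
  · exact alpha_induce_le _ _
  · exact omega_induce_le _ _

/-- In a minimal non-sum-perfect graph with `α = ω = 3`, no vertex lies in every triangle,
and there are no two vertex-disjoint triangles. -/
theorem stmt13 {V : Type*} [Fintype V] (G : SimpleGraph V)
    (hG : MinimalNonSumPerfect G) (hα : alphaNum G = 3) (hω : omegaNum G = 3) :
    (∀ v : V, ∃ t : Finset V, G.IsNClique 3 t ∧ v ∉ t) ∧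
    ¬ ∃ t₁ t₂ : Finset V, G.IsNClique 3 t₁ ∧ G.IsNClique 3 t₂ ∧ Disjoint t₁ t₂ := by
  classical
  obtain ⟨hns, hmin⟩ := hG
  rw [SumPerfect] at hns
  push_neg at hns
  obtain ⟨s₀, hs₀⟩ := hns
  have hs₀u : s₀ = Finset.univ := by
    by_contra h
    exact absurd (key G s₀ (hmin s₀ h)) (not_le.mpr hs₀)
  subst hs₀u
  have hVge : 6 < Fintype.card V := by
    have h1 := alpha_le_induce_univ G
    have h2 := omega_le_induce_univ G
    calc 6 = alphaNum G + omegaNum G := by rw [hα, hω]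
      _ ≤ _ + _ := Nat.add_le_add h1 h2
      _ < (Finset.univ : Finset V).card := hs₀
      _ = Fintype.card V := Finset.card_univ
  have main : ∀ v : V, Fintype.card V ≤ 7 ∧
      3 ≤ omegaNum (G.induce (↑(Finset.univ.erase v) : Set V)) := by
    intro v
    have hne : Finset.univ.erase v ≠ Finset.univ := by
      intro h
      have hmem := Finset.mem_univ v
      rw [← h] at hmem
      exact Finset.notMem_erase v Finset.univ hmem
    have hk := key G _ (hmin _ hne)
    have hcard : (Finset.univ.erase v).card = Fintype.card V - 1 := by
      rw [Finset.card_erase_of_mem (Finset.mem_univ v), Finset.card_univ]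
    have hαle : alphaNum (G.induce (↑(Finset.univ.erase v) : Set V)) ≤ 3 :=
      hα ▸ alpha_induce_le G _
    have hωle : omegaNum (G.induce (↑(Finset.univ.erase v) : Set V)) ≤ 3 :=
      hω ▸ omega_induce_le G _
    omega
  have hV7 : Fintype.card V = 7 := by
    have hne : Nonempty V := Fintype.card_pos_iff.mp (by omega)
    obtain ⟨v⟩ := hne
    have := (main v).1
    omega
  constructor
  · intro v
    have h3' : omegaNum (G.induce (↑(Finset.univ.erase v) : Set V)) = 3 :=
      le_antisymm (hω ▸ omega_induce_le G _) (main v).2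
    obtain ⟨t, ht⟩ := exists_clique_omega (G.induce (↑(Finset.univ.erase v) : Set V))
    rw [h3'] at ht
    refine ⟨t.map (Function.Embedding.subtype _), clique_map' _ (fun _ _ h => h) ht, ?_⟩
    intro hvmem
    simp only [Finset.mem_map, Function.Embedding.coe_subtype] at hvmem
    obtain ⟨a, _, hav⟩ := hvmem
    have ha2 : (a : V) ∈ Finset.univ.erase v := a.2
    rw [hav] at ha2
    exact Finset.notMem_erase v Finset.univ ha2
  · rintro ⟨t₁, t₂, h₁, h₂, hd⟩
    set s := t₁ ∪ t₂ with hs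
    have hcs : s.card = 6 := by
      rw [hs, Finset.card_union_of_disjoint hd, h₁.2, h₂.2]
    have hne : s ≠ Finset.univ := by
      intro h
      rw [h, Finset.card_univ, hV7] at hcs
      omega
    have hk := key G s (hmin s hne)
    have hωle : omegaNum (G.induce (↑s : Set V)) ≤ 3 := hω ▸ omega_induce_le G _
    have hαge : 3 ≤ alphaNum (G.induce (↑s : Set V)) := by omega
    obtain ⟨T, hT⟩ := exists_clique_omega ((G.induce (↑s : Set V))ᶜ)
    have hS : Gᶜ.IsNClique (omegaNum ((G.induce (↑s : Set V))ᶜ))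
        (T.map (Function.Embedding.subtype _)) :=
      clique_map' (G' := Gᶜ) (H := (G.induce (↑s : Set V))ᶜ) (Function.Embedding.subtype _)
        (fun a b hab => ⟨fun e => hab.1 (Subtype.val_injective e), hab.2⟩) hT
    set S := T.map (Function.Embedding.subtype _) with hSdef
    have hScard : 3 ≤ S.card := by
      rw [hS.2]
      exact hαge
    have hSsub : S ⊆ s := by
      intro x hx
      simp only [hSdef, Finset.mem_map, Function.Embedding.coe_subtype] at hx
      obtain ⟨a, _, rfl⟩ := hx
      exact a.2
    have hint : ∀ (t : Finset V), G.IsNClique 3 t → (S ∩ t).card ≤ 1 := by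
      intro t ht
      apply Finset.card_le_one.mpr
      intro a ha b hb
      by_contra hne'
      have hadj : G.Adj a b :=
        ht.1 (Finset.mem_coe.mpr (Finset.mem_of_mem_inter_right ha))
          (Finset.mem_coe.mpr (Finset.mem_of_mem_inter_right hb)) hne'
      have hnadj : Gᶜ.Adj a b :=
        hS.1 (Finset.mem_coe.mpr (Finset.mem_of_mem_inter_left ha))
          (Finset.mem_coe.mpr (Finset.mem_of_mem_inter_left hb)) hne'
      exact hnadj.2 hadj
    have hle2 : S.card ≤ 2 := by
      have heq : S = S ∩ t₁ ∪ S ∩ t₂ := by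
        rw [← Finset.inter_union_distrib_left]
        exact (Finset.inter_eq_left.mpr hSsub).symm
      calc S.card = (S ∩ t₁ ∪ S ∩ t₂).card := by rw [← heq]
        _ ≤ (S ∩ t₁).card + (S ∩ t₂).card := Finset.card_union_le _ _
        _ ≤ 2 := by
            have := hint t₁ h₁
            have := hint t₂ h₂
            omega
    omega
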